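/- Let k be a perfect field of characteristic p > 0 and A a finite-dimensional symmetric k-algebra with symmetrising form ⟨·,·⟩. Then for every n ∈ ℕ and every b ∈ A there exists an element c ∈ A, unique modulo KA, such that ⟨a^{p^n}, b⟩ = ⟨a, c⟩^{p^n} for all a ∈ Z(A). (This defines the Külshammer map κ_n : A/KA → A/KA.) -/

import Mathlib

/-- `KA`: the `k`-linear span in `A` of all commutators `a*b - b*a`. -/
def commutatorSpan (k A : Type*) [Field k] [Ring A] [Algebra k A] : Submodule k A :=
  Submodule.span k {x : A | ∃ a b : A, x = a * b - b * a}

/-- For a finite-dimensional symmetric algebra `A` over a perfect field `k` of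
characteristic `p > 0`, every `n ∈ ℕ` and every `b ∈ A` admit an element `c ∈ A`,
unique modulo `KA`, with `⟨a^{p^n}, b⟩ = ⟨a, c⟩^{p^n}` for all central `a`.
(This defines the Külshammer map `κ_n : A/KA → A/KA`.) -/
theorem exists_kappa_unique_mod_commutatorSpan
    (k A : Type*) [Field k] [Ring A] [Algebra k A] [FiniteDimensional k A]
    (p : ℕ) [Fact p.Prime] [CharP k p] [ExpChar k p] [PerfectRing k p]
    (B : A →ₗ[k] A →ₗ[k] k)
    (hsymm : ∀ a b : A, B a b = B b a)
    (hassoc : ∀ a b c : A, B (a * b) c = B a (b * c))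
    (hnondeg : ∀ a : A, (∀ b : A, B a b = 0) → a = 0)
    (n : ℕ) (b : A) :
    ∃ c : A, (∀ a ∈ Subalgebra.center k A, B (a ^ p ^ n) b = (B a c) ^ p ^ n) ∧
      ∀ c' : A, (∀ a ∈ Subalgebra.center k A, B (a ^ p ^ n) b = (B a c') ^ p ^ n) →
        c' - c ∈ commutatorSpan k A := by
  have hpn : p ^ n ≠ 0 := pow_ne_zero n (Fact.out : p.Prime).ne_zero
  rcases subsingleton_or_nontrivial A with hA | hA
  · refine ⟨0, fun a _ => ?_, fun c' _ => ?_⟩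
    · rw [Subsingleton.elim (a ^ p ^ n) 0, Subsingleton.elim a 0]
      simp [zero_pow hpn]
    · rw [Subsingleton.elim (c' - 0) (0 : A)]
      exact (commutatorSpan k A).zero_mem
  haveI : CharP A p := charP_of_injective_algebraMap (algebraMap k A).injective p
  haveI : ExpChar A p := ExpChar.prime Fact.out
  have hB : LinearMap.BilinForm.Nondegenerate B :=
    ⟨fun a ha => hnondeg a ha, fun a ha => hnondeg a fun b => by rw [hsymm]; exact ha b⟩
  have hrefl : LinearMap.BilinForm.IsRefl B := fun x y h => by rw [hsymm]; exact h
  set Z : Submodule k A := Subalgebra.toSubmodule (Subalgebra.center k A) with hZ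
  set g : k ≃+* k := (iterateFrobeniusEquiv k p n).symm with hg
  have hg_pow : ∀ t : k, g t ^ p ^ n = t := fun t => by
    have := (iterateFrobeniusEquiv k p n).apply_symm_apply t
    rwa [iterateFrobeniusEquiv_def] at this
  have hg_inj : ∀ s t : k, s ^ p ^ n = t ^ p ^ n → s = t := fun s t h =>
    (iterateFrobeniusEquiv k p n).injective (by
      rwa [iterateFrobeniusEquiv_def, iterateFrobeniusEquiv_def])
  let φ : Z →ₗ[k] k :=
    { toFun := fun a => g (B ((a : A) ^ p ^ n) b)
      map_add' := fun x y => by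
        show g (B (((x : A) + (y : A)) ^ p ^ n) b) = _
        have hx : (x : A) ∈ Subalgebra.center k A := x.2
        have hc : Commute (x : A) (y : A) := (Subalgebra.mem_center_iff.mp hx y).symm
        rw [add_pow_expChar_pow_of_commute p n hc, map_add, LinearMap.add_apply, map_add]
      map_smul' := fun r x => by
        show g (B ((r • (x : A)) ^ p ^ n) b) = r * g (B ((x : A) ^ p ^ n) b)
        rw [smul_pow, map_smul, LinearMap.smul_apply, smul_eq_mul, map_mul]
        congr 1
        exact hg_inj _ _ (by rw [hg_pow]) }
  obtain ⟨Φ, hΦ⟩ := LinearMap.exists_extend φ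
  set c : A := (LinearMap.BilinForm.toDual B hB).symm Φ with hc
  have hBc : ∀ a : A, B a c = Φ a := fun a => by
    rw [hsymm]
    exact LinearMap.BilinForm.apply_toDual_symm_apply Φ a
  have hφval : ∀ (a : A) (ha : a ∈ Subalgebra.center k A),
      B a c = g (B (a ^ p ^ n) b) := fun a ha => by
    have h := LinearMap.congr_fun hΦ ⟨a, ha⟩
    simp only [LinearMap.comp_apply, Submodule.subtype_apply] at h
    rw [hBc]
    exact h
  have hmain : ∀ a ∈ Subalgebra.center k A, B (a ^ p ^ n) b = (B a c) ^ p ^ n := by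
    intro a ha
    rw [hφval a ha, hg_pow]
  refine ⟨c, hmain, ?_⟩
  have hKZ : LinearMap.BilinForm.orthogonal B (commutatorSpan k A) = Z := by
    ext w
    simp only [LinearMap.BilinForm.mem_orthogonal_iff]
    constructor
    · intro hw
      rw [hZ, Subalgebra.mem_toSubmodule, Subalgebra.mem_center_iff]
      intro u
      have key : ∀ a : A, B (u * w - w * u) a = 0 := by
        intro a
        rw [hsymm]
        have h0 : B (a * u - u * a) w = 0 :=
          hw _ (Submodule.subset_span ⟨a, u, rfl⟩)
        have h1 : B a (u * w) - B a (w * u) = B (a * u - u * a) w := by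
          rw [map_sub, LinearMap.sub_apply, hassoc a u w, hassoc u a w,
            hsymm u (a * w), hassoc a w u]
        rw [map_sub, h1, h0]
      exact sub_eq_zero.mp (hnondeg _ key)
    · intro hw x hx
      rw [hZ, Subalgebra.mem_toSubmodule] at hw
      have hle : commutatorSpan k A ≤ LinearMap.ker (B.flip w) := by
        rw [commutatorSpan, Submodule.span_le]
        rintro _ ⟨a, u, rfl⟩
        simp only [SetLike.mem_coe, LinearMap.mem_ker, LinearMap.flip_apply]
        rw [map_sub, LinearMap.sub_apply, hassoc a u w, hassoc u a w,
          Subalgebra.mem_center_iff.mp hw u, ← hassoc a w u, hsymm (a * w) u, sub_self]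
      exact hle hx
  have hZK : LinearMap.BilinForm.orthogonal B Z = commutatorSpan k A := by
    rw [← hKZ, LinearMap.BilinForm.orthogonal_orthogonal hB hrefl]
  intro c' hc'
  rw [← hZK]
  refine LinearMap.BilinForm.mem_orthogonal_iff.mpr fun z hz => ?_
  have hz' : z ∈ Subalgebra.center k A := by rwa [hZ, Subalgebra.mem_toSubmodule] at hz
  have hzz : B z c' = B z c := hg_inj _ _ (by rw [← hc' z hz', ← hmain z hz'])
  show B z (c' - c) = 0
  rw [map_sub, hzz, sub_self]
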